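/- arXiv:2305.02254 — 2 statements merged into one kernel-verified Lean document; each statement's English description precedes it below -/
import Mathlib

section
/- Let X be a complete operator system (or unital C*-algebra) with state space S(X), and let L : X → [0,∞] be a seminorm. Define the extended metric d_L(μ,ν) = sup{ |μ(x) − ν(x)| : x ∈ X, L(x) ≤ 1 } on S(X). If d_L(μ,ν) < ∞ for all μ, ν ∈ S(X), then S(X) has finite diameter with respect to d_L, i.e. there is C > 0 with d_L(μ,ν) ≤ C for all μ, ν ∈ S(X). -/
open scoped ENNReal ComplexOrder

/-- A state on a unital C*-algebra: a continuous linear functional which is unital and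
positive (hence automatically of norm one). -/
def IsState {A : Type*} [CStarAlgebra A] (φ : A →L[ℂ] ℂ) : Prop :=
  φ 1 = 1 ∧ ∀ a : A, 0 ≤ φ (star a * a)

section Aux
variable {X : Type*} [CStarAlgebra X] [PartialOrder X] [StarOrderedRing X]

private lemma state_pos_apply (φ : X →L[ℂ] ℂ) (hφ : ∀ a : X, 0 ≤ φ (star a * a))
    {b : X} (hb : 0 ≤ b) : 0 ≤ φ b := by
  rw [StarOrderedRing.nonneg_iff] at hb
  induction hb using AddSubmonoid.closure_induction with
  | mem x hx => obtain ⟨s, rfl⟩ := hx; exact hφ s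
  | zero => simp
  | add x y _ _ hx hy => rw [map_add]; exact add_nonneg hx hy

private lemma state_sa_bound (φ : X →L[ℂ] ℂ) (h1 : φ 1 = 1)
    (hφ : ∀ a : X, 0 ≤ φ (star a * a)) {b : X} (hb : IsSelfAdjoint b) :
    ‖φ b‖ ≤ ‖b‖ := by
  have hr : ∀ r : ℝ, φ (algebraMap ℝ X r) = (r : ℂ) := by
    intro r
    rw [Algebra.algebraMap_eq_smul_one, ← Complex.coe_smul, map_smul, h1, smul_eq_mul, mul_one]
  have h2 : 0 ≤ φ (algebraMap ℝ X ‖b‖ - b) :=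
    state_pos_apply φ hφ (sub_nonneg.mpr hb.le_algebraMap_norm_self)
  have h3 : 0 ≤ φ (b - -(algebraMap ℝ X ‖b‖)) :=
    state_pos_apply φ hφ (sub_nonneg.mpr hb.neg_algebraMap_norm_le_self)
  rw [map_sub, hr] at h2
  rw [map_sub, map_neg, hr, sub_neg_eq_add] at h3
  rw [Complex.le_def] at h2 h3
  simp only [Complex.zero_re, Complex.zero_im, Complex.sub_re, Complex.sub_im,
    Complex.add_re, Complex.add_im, Complex.ofReal_re, Complex.ofReal_im] at h2 h3
  have him : (φ b).im = 0 := by linarith [h2.2, h3.2]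
  have : φ b = ((φ b).re : ℂ) := Complex.ext rfl (by simp [him])
  rw [this, Complex.norm_real, Real.norm_eq_abs]
  rw [abs_le]
  constructor <;> [linarith [h3.1]; linarith [h2.1]]

private lemma state_norm_bound (φ : X →L[ℂ] ℂ) (h1 : φ 1 = 1)
    (hφ : ∀ a : X, 0 ≤ φ (star a * a)) (a : X) :
    ‖φ a‖ ≤ 2 * ‖a‖ := by
  set re : X := (2⁻¹ : ℂ) • (a + star a) with hre_def
  set im : X := (-Complex.I * 2⁻¹) • (a - star a) with him_def
  have hre : IsSelfAdjoint re := by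
    rw [IsSelfAdjoint, hre_def, star_smul, star_add, star_star]
    rw [show star (2⁻¹ : ℂ) = 2⁻¹ by simp, add_comm]
  have him : IsSelfAdjoint im := by
    rw [IsSelfAdjoint, him_def, star_smul, star_sub, star_star]
    rw [show star (-Complex.I * 2⁻¹ : ℂ) = Complex.I * 2⁻¹ by simp [Complex.star_def]]
    rw [show (star a - a) = -(a - star a) by abel, smul_neg, ← neg_smul, neg_mul]
  have key : a = re + Complex.I • im := by
    rw [hre_def, him_def, smul_smul,
      show Complex.I * (-Complex.I * 2⁻¹) = 2⁻¹ by
        rw [show Complex.I * (-Complex.I * 2⁻¹) = -(Complex.I * Complex.I) * 2⁻¹ by ring,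
          Complex.I_mul_I]; ring,
      ← smul_add, show (a + star a) + (a - star a) = (2 : ℂ) • a by rw [two_smul]; abel,
      smul_smul]
    norm_num
  have hnre : ‖re‖ ≤ ‖a‖ := by
    rw [hre_def, norm_smul]
    calc ‖(2⁻¹ : ℂ)‖ * ‖a + star a‖ ≤ 2⁻¹ * (‖a‖ + ‖star a‖) := by
          rw [show ‖(2⁻¹ : ℂ)‖ = 2⁻¹ by simp]
          gcongr
          exact norm_add_le _ _
      _ = ‖a‖ := by rw [norm_star]; ring
  have hnim : ‖im‖ ≤ ‖a‖ := by
    rw [him_def, norm_smul]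
    calc ‖(-Complex.I * 2⁻¹ : ℂ)‖ * ‖a - star a‖ ≤ 2⁻¹ * (‖a‖ + ‖star a‖) := by
          rw [show ‖(-Complex.I * 2⁻¹ : ℂ)‖ = 2⁻¹ by simp]
          gcongr
          exact norm_sub_le _ _
      _ = ‖a‖ := by rw [norm_star]; ring
  calc ‖φ a‖ = ‖φ re + Complex.I * φ im‖ := by
        rw [key, map_add, map_smul, smul_eq_mul]; norm_num
    _ ≤ ‖φ re‖ + ‖Complex.I * φ im‖ := norm_add_le _ _
    _ ≤ ‖re‖ + ‖im‖ := by
        rw [norm_mul, Complex.norm_I, one_mul]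
        exact add_le_add (state_sa_bound φ h1 hφ hre) (state_sa_bound φ h1 hφ him)
    _ ≤ 2 * ‖a‖ := by linarith

end Aux

/-- If the extended metric `d_L` associated with a seminorm `L : X → [0,∞]` is finite on
every pair of states, then the state space has finite diameter with respect to `d_L`. -/
theorem finite_implies_bounded_diameter
    {X : Type*} [CStarAlgebra X] (L : X → ℝ≥0∞)
    (hL_add : ∀ x y : X, L (x + y) ≤ L x + L y)
    (hL_smul : ∀ (c : ℂ) (x : X), L (c • x) = (‖c‖₊ : ℝ≥0∞) * L x)
    (hfin : ∀ μ ν : X →L[ℂ] ℂ, IsState μ → IsState ν →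
      ∃ C : ℝ, ∀ x : X, L x ≤ 1 → ‖μ x - ν x‖ ≤ C) :
    ∃ C : ℝ, 0 < C ∧ ∀ μ ν : X →L[ℂ] ℂ, IsState μ → IsState ν →
      ∀ x : X, L x ≤ 1 → ‖μ x - ν x‖ ≤ C := by
  letI := CStarAlgebra.spectralOrder X
  haveI := CStarAlgebra.spectralOrderedRing X
  -- trivial case: no states
  by_cases hne : ∃ φ : X →L[ℂ] ℂ, IsState φ
  swap
  · exact ⟨1, one_pos, fun μ ν hμ _ => absurd ⟨μ, hμ⟩ hne⟩
  obtain ⟨μ0, hμ0⟩ := hne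
  -- the set of states is closed
  set S : Set (X →L[ℂ] ℂ) := {φ | IsState φ} with hS_def
  have hev : ∀ a : X, Continuous fun φ : X →L[ℂ] ℂ => φ a := fun a =>
    (ContinuousLinearMap.apply ℂ ℂ a).continuous
  have hclC : IsClosed {z : ℂ | 0 ≤ z} := by
    have : {z : ℂ | 0 ≤ z} = {z : ℂ | (0:ℝ) ≤ z.re} ∩ {z : ℂ | z.im = 0} := by
      ext z; simp [Complex.le_def, eq_comm]
    rw [this]
    exact (isClosed_le continuous_const Complex.continuous_re).inter
      (isClosed_eq Complex.continuous_im continuous_const)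
  have hS_closed : IsClosed S := by
    have : S = {φ : X →L[ℂ] ℂ | φ 1 = 1} ∩ ⋂ a : X, {φ : X →L[ℂ] ℂ | 0 ≤ φ (star a * a)} := by
      ext φ; simp [hS_def, IsState, Set.mem_iInter]
    rw [this]
    exact (isClosed_eq (hev 1) continuous_const).inter
      (isClosed_iInter fun a => (hclC.preimage (hev (star a * a))))
  haveI : CompleteSpace S := hS_closed.completeSpace_coe
  haveI : Nonempty S := ⟨⟨μ0, hμ0⟩⟩
  -- Baire category
  set F : ℕ → Set S := fun n =>
    {φ : S | ∀ x : X, L x ≤ 1 → ‖(φ : X →L[ℂ] ℂ) x - μ0 x‖ ≤ n} with hF_def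
  have hF_closed : ∀ n, IsClosed (F n) := by
    intro n
    have : F n = ⋂ x : X, ⋂ (_ : L x ≤ 1),
        {φ : S | ‖(φ : X →L[ℂ] ℂ) x - μ0 x‖ ≤ n} := by
      ext φ; simp [hF_def, Set.mem_iInter]
    rw [this]
    refine isClosed_iInter fun x => isClosed_iInter fun _ => ?_
    exact isClosed_le (continuous_norm.comp
      (((hev x).comp continuous_subtype_val).sub continuous_const)) continuous_const
  have hF_cover : ⋃ n, F n = Set.univ := by
    rw [Set.eq_univ_iff_forall]
    intro φ
    obtain ⟨C, hC⟩ := hfin φ μ0 φ.2 hμ0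
    refine Set.mem_iUnion.mpr ⟨⌈C⌉₊, fun x hx => (hC x hx).trans ?_⟩
    exact Nat.le_ceil C
  obtain ⟨n, φ0, hφ0⟩ := nonempty_interior_of_iUnion_of_closed hF_closed hF_cover
  obtain ⟨ε, hε, hball⟩ := Metric.mem_nhds_iff.mp (mem_interior_iff_mem_nhds.mp hφ0)
  have hφ0n : φ0 ∈ F n := interior_subset hφ0
  -- states are norm-bounded by 2, pairwise distance ≤ 4
  have hnb : ∀ (φ ψ : X →L[ℂ] ℂ), IsState φ → IsState ψ → ‖φ - ψ‖ ≤ 4 := by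
    intro φ ψ hφ hψ
    refine ContinuousLinearMap.opNorm_le_bound _ (by norm_num) fun x => ?_
    have h1 := state_norm_bound φ hφ.1 hφ.2 x
    have h2 := state_norm_bound ψ hψ.1 hψ.2 x
    calc ‖(φ - ψ) x‖ = ‖φ x - ψ x‖ := rfl
      _ ≤ ‖φ x‖ + ‖ψ x‖ := by
          exact norm_sub_le (φ x) (ψ x)
      _ ≤ 4 * ‖x‖ := by linarith
  obtain ⟨t, ht_pos, ht1, htε⟩ : ∃ t : ℝ, 0 < t ∧ t ≤ 1 ∧ t * 4 < ε := by
    refine ⟨min ε 1 / 5, by positivity, ?_, ?_⟩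
    · have : min ε 1 ≤ 1 := min_le_right _ _
      linarith
    · have h1 : min ε 1 ≤ ε := min_le_left _ _
      linarith
  -- key estimate against φ0
  have hkey : ∀ μ : X →L[ℂ] ℂ, IsState μ → ∀ x : X, L x ≤ 1 →
      ‖μ x - (φ0 : X →L[ℂ] ℂ) x‖ ≤ 2 * n / t := by
    intro μ hμ x hx
    set ψ : X →L[ℂ] ℂ := (φ0 : X →L[ℂ] ℂ) + (t : ℂ) • (μ - (φ0 : X →L[ℂ] ℂ)) with hψ_def
    have hψ_state : IsState ψ := by
      constructor
      · simp [hψ_def, φ0.2.1, hμ.1]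
      · intro a
        have : ψ (star a * a) = ((1 - t : ℝ) : ℂ) * (φ0 : X →L[ℂ] ℂ) (star a * a)
            + (t : ℂ) * μ (star a * a) := by
          simp only [hψ_def, ContinuousLinearMap.add_apply, ContinuousLinearMap.smul_apply,
            ContinuousLinearMap.sub_apply, smul_eq_mul]
          push_cast; ring
        rw [this]
        refine add_nonneg (mul_nonneg ?_ (φ0.2.2 a)) (mul_nonneg ?_ (hμ.2 a))
        · rw [Complex.zero_le_real]; linarith
        · rw [Complex.zero_le_real]; exact ht_pos.le
    have hψ_mem : (⟨ψ, hψ_state⟩ : S) ∈ F n := by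
      apply hball
      rw [Metric.mem_ball, Subtype.dist_eq, dist_eq_norm]
      have : ψ - (φ0 : X →L[ℂ] ℂ) = (t : ℂ) • (μ - (φ0 : X →L[ℂ] ℂ)) := by
        rw [hψ_def]; abel
      rw [this, norm_smul ((t : ℝ) : ℂ) (μ - (φ0 : X →L[ℂ] ℂ))]
      have h4 : ‖μ - (φ0 : X →L[ℂ] ℂ)‖ ≤ 4 := hnb _ _ hμ φ0.2
      calc ‖(t : ℂ)‖ * ‖μ - (φ0 : X →L[ℂ] ℂ)‖ ≤ t * 4 := by
            rw [Complex.norm_real, Real.norm_of_nonneg ht_pos.le]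
            nlinarith
        _ < ε := htε
    have h1 : ‖ψ x - μ0 x‖ ≤ n := hψ_mem x hx
    have h2 : ‖(φ0 : X →L[ℂ] ℂ) x - μ0 x‖ ≤ n := hφ0n x hx
    have h3 : ‖ψ x - (φ0 : X →L[ℂ] ℂ) x‖ ≤ 2 * n := by
      calc ‖ψ x - (φ0 : X →L[ℂ] ℂ) x‖
          = ‖(ψ x - μ0 x) - ((φ0 : X →L[ℂ] ℂ) x - μ0 x)‖ := by ring_nf
        _ ≤ ‖ψ x - μ0 x‖ + ‖(φ0 : X →L[ℂ] ℂ) x - μ0 x‖ := by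
            exact norm_sub_le (ψ x - μ0 x) ((φ0 : X →L[ℂ] ℂ) x - μ0 x)
        _ ≤ 2 * n := by linarith
    have h5 : ψ x - (φ0 : X →L[ℂ] ℂ) x = (t : ℂ) * (μ x - (φ0 : X →L[ℂ] ℂ) x) := by
      simp only [hψ_def, ContinuousLinearMap.add_apply, ContinuousLinearMap.smul_apply,
        ContinuousLinearMap.sub_apply, smul_eq_mul]
      ring
    rw [h5, norm_mul, Complex.norm_real, Real.norm_eq_abs, abs_of_pos ht_pos] at h3
    rw [le_div_iff₀ ht_pos]
    linarith [h3]
  have hCpos : (0 : ℝ) < 4 * n / t + 1 := by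
    have : (0 : ℝ) ≤ 4 * n / t := div_nonneg (by positivity) ht_pos.le
    linarith
  refine ⟨4 * n / t + 1, hCpos, fun μ ν hμ hν x hx => ?_⟩
  have h1 := hkey μ hμ x hx
  have h2 := hkey ν hν x hx
  calc ‖μ x - ν x‖
      = ‖(μ x - (φ0 : X →L[ℂ] ℂ) x) - (ν x - (φ0 : X →L[ℂ] ℂ) x)‖ := by ring_nf
    _ ≤ ‖μ x - (φ0 : X →L[ℂ] ℂ) x‖ + ‖ν x - (φ0 : X →L[ℂ] ℂ) x‖ := by
        exact norm_sub_le (μ x - (φ0 : X →L[ℂ] ℂ) x) (ν x - (φ0 : X →L[ℂ] ℂ) x)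
    _ ≤ 4 * n / t + 1 := by
        have : 2 * n / t + 2 * n / t = 4 * n / t := by ring
        linarith
end

section
/- With notation as above (fₙ = (1+εₙ²)^{-1/2}(eₙ + εₙe_{n+1}), qₙ the rank-one projection onto ℂfₙ, D the diagonal operator Deₖ = dₖeₖ), the commutator [D, qₙ] extends to a bounded operator on ℓ²(ℕ) with operator norm ‖[D,qₙ]‖ ≤ (εₙ/(1+εₙ²))(d_{n+1} − dₙ). -/
noncomputable section
open scoped ENNReal ComplexOrder

local notation "ℓ²" => lp (fun _ : ℕ => ℂ) 2

/-- Build an element of `ℓ²(ℕ)` from a square-summable sequence. -/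
def mkLp (f : ℕ → ℂ) (hf : Memℓp f 2) : ℓ² := ⟨f, hf⟩

@[simp] lemma mkLp_apply (f : ℕ → ℂ) (hf : Memℓp f 2) (n : ℕ) : (mkLp f hf) n = f n := rfl

/-- The standard orthonormal basis vectors of `ℓ²(ℕ)`. -/
def e (n : ℕ) : ℓ² := lp.single 2 n 1

/-- The maximal domain of the diagonal operator with eigenvalues `d n`. -/
def domD (d : ℕ → ℝ) : Submodule ℂ ℓ² where
  carrier := {x | Memℓp (fun n => (d n : ℂ) * x n) 2}
  zero_mem' := by
    show Memℓp (fun n => (d n : ℂ) * (0 : ℓ²) n) 2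
    convert zero_memℓp (E := fun _ : ℕ => ℂ) (p := 2) using 1 <;> exact funext fun n => by simp
  add_mem' := by
    intro x y hx hy
    have h := hx.add hy
    have : (fun n => (d n : ℂ) * (x + y) n) = fun n => (d n : ℂ) * x n + (d n : ℂ) * y n := by
      funext n; simp [mul_add]
    show Memℓp _ 2
    rw [this]; exact h
  smul_mem' := by
    intro c x hx
    have h := hx.const_smul c
    have : (fun n => (d n : ℂ) * (c • x) n) = fun n => c • ((d n : ℂ) * x n) := by
      funext n; simp [smul_eq_mul]; ring
    show Memℓp _ 2
    rw [this]; exact h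

/-- The self-adjoint diagonal operator `D eₙ = dₙ eₙ` on its maximal domain. -/
def Dop (d : ℕ → ℝ) : ℓ² →ₗ.[ℂ] ℓ² where
  domain := domD d
  toFun :=
    { toFun := fun x => mkLp (fun n => (d n : ℂ) * (x : ℓ²) n) x.2
      map_add' := by
        intro x y
        apply lp.ext
        funext n
        simp [mkLp, mul_add]
        rfl
      map_smul' := by
        intro c x
        apply lp.ext
        funext n
        simp [mkLp, smul_eq_mul]
        ring }

local notation "⟪" x ", " y "⟫" => @inner ℂ _ _ x y

/-- The unit vectors `fₙ = (1+εₙ²)^{-1/2}(eₙ + εₙ e_{n+1})`. -/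
def f (ε : ℕ → ℝ) (n : ℕ) : ℓ² :=
  (((1 + ε n ^ 2 : ℝ) ^ (-(1 / 2 : ℝ)) : ℝ) : ℂ) • (e n + ((ε n : ℝ) : ℂ) • e (n + 1))

/-- The rank-one orthogonal projection `qₙ` onto `ℂ fₙ`. -/
def q (ε : ℕ → ℝ) (n : ℕ) : lp (fun _ : ℕ => ℂ) 2 →L[ℂ] lp (fun _ : ℕ => ℂ) 2 :=
  (innerSL ℂ (f ε n)).smulRight (f ε n)

lemma e_apply (i k : ℕ) : (e i) k = if k = i then 1 else 0 := by
  simp [e, lp.single_apply, Pi.single_apply]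

lemma e_apply_self (i : ℕ) : (e i) i = 1 := by simp [e_apply]

lemma e_apply_ne {i k : ℕ} (h : k ≠ i) : (e i) k = 0 := by simp [e_apply, h]

lemma orthonormal_e : Orthonormal ℂ e := by
  rw [orthonormal_iff_ite]
  intro i j
  rw [e, lp.inner_single_left]
  simp [e_apply, eq_comm]

lemma inner_e (i : ℕ) (ξ : ℓ²) : ⟪e i, ξ⟫ = ξ i := by
  rw [e, lp.inner_single_left]; simp

/-- The coordinates of `f ε n`. -/
lemma f_apply (ε : ℕ → ℝ) (n k : ℕ) :
    (f ε n) k = (((1 + ε n ^ 2 : ℝ) ^ (-(1 / 2 : ℝ)) : ℝ) : ℂ) *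
      ((if k = n then 1 else 0) + (ε n : ℂ) * (if k = n + 1 then 1 else 0)) := by
  simp only [f, lp.coeFn_smul, Pi.smul_apply, lp.coeFn_add, Pi.add_apply, e_apply,
    smul_eq_mul]

lemma inner_f (ε : ℕ → ℝ) (n : ℕ) (ξ : ℓ²) :
    ⟪f ε n, ξ⟫ = (((1 + ε n ^ 2 : ℝ) ^ (-(1 / 2 : ℝ)) : ℝ) : ℂ) *
      (ξ n + (ε n : ℂ) * ξ (n + 1)) := by
  simp only [f, inner_smul_left, inner_add_left, inner_e, inner_smul_left,
    RCLike.star_def, Complex.conj_ofReal]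

lemma rpow_half_sq {x : ℝ} (hx : 0 < x) :
    ((x ^ (-(1 / 2 : ℝ)) : ℝ) : ℂ) * ((x ^ (-(1 / 2 : ℝ)) : ℝ) : ℂ) = ((x⁻¹ : ℝ) : ℂ) := by
  rw [← Complex.ofReal_mul, ← Real.rpow_add hx]
  norm_num [Real.rpow_neg_one]

/-- The commutator `[D, qₙ]`, defined on the span of the basis vectors, extends to a
bounded operator on `ℓ²(ℕ)` of norm at most `(εₙ/(1+εₙ²))(d_{n+1} − dₙ)`. -/
theorem commutator_bounded_extension
    (d : ℕ → ℝ) (hd_mono : StrictMono d) (ε : ℕ → ℝ) (hε : ∀ n, 0 < ε n) (n : ℕ) :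
    ∃ T : lp (fun _ : ℕ => ℂ) 2 →L[ℂ] lp (fun _ : ℕ => ℂ) 2,
      ‖T‖ ≤ ε n / (1 + ε n ^ 2) * (d (n + 1) - d n) ∧
      ∀ ξ ∈ Submodule.span ℂ (Set.range e), ∀ (hξ : ξ ∈ domD d) (hq : q ε n ξ ∈ domD d),
        T ξ = Dop d ⟨q ε n ξ, hq⟩ - q ε n (Dop d ⟨ξ, hξ⟩) := by
  classical
  set a : ℝ := ε n / (1 + ε n ^ 2) * (d (n + 1) - d n) with ha
  have hεn := hε n
  have hx : (0 : ℝ) < 1 + ε n ^ 2 := by positivity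
  have hd : d n < d (n + 1) := hd_mono (Nat.lt_succ_self n)
  have ha_nonneg : 0 ≤ a := by
    apply mul_nonneg
    · positivity
    · linarith
  refine ⟨(a : ℂ) • ((innerSL ℂ (e n)).smulRight (e (n + 1)) -
      (innerSL ℂ (e (n + 1))).smulRight (e n)), ?_, ?_⟩
  · apply ContinuousLinearMap.opNorm_le_bound _ ha_nonneg
    intro ξ
    have hTξ : ((a : ℂ) • ((innerSL ℂ (e n)).smulRight (e (n + 1)) -
        (innerSL ℂ (e (n + 1))).smulRight (e n))) ξ
        = (a : ℂ) • (⟪e n, ξ⟫ • e (n + 1) - ⟪e (n + 1), ξ⟫ • e n) := by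
      rw [ContinuousLinearMap.smul_apply, ContinuousLinearMap.sub_apply]
      simp [ContinuousLinearMap.smul_apply, ContinuousLinearMap.sub_apply,
        ContinuousLinearMap.smulRight_apply]
    have h0 : ⟪(⟪e n, ξ⟫ • e (n + 1) : ℓ²), (⟪e (n + 1), ξ⟫ • e n : ℓ²)⟫ = 0 := by
      rw [inner_smul_left, inner_smul_right, orthonormal_e.2 (by omega : n + 1 ≠ n)]
      ring
    have hnorm : ‖(⟪e n, ξ⟫ • e (n + 1) - ⟪e (n + 1), ξ⟫ • e n : ℓ²)‖ ^ 2
        = ‖⟪e n, ξ⟫‖ ^ 2 + ‖⟪e (n + 1), ξ⟫‖ ^ 2 := by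
      rw [@norm_sub_sq ℂ, h0]
      simp [norm_smul, orthonormal_e.1]
    have hbessel : ‖⟪e n, ξ⟫‖ ^ 2 + ‖⟪e (n + 1), ξ⟫‖ ^ 2 ≤ ‖ξ‖ ^ 2 := by
      have := orthonormal_e.sum_inner_products_le (s := {n, n + 1}) ξ
      rwa [Finset.sum_pair (by omega : n ≠ n + 1)] at this
    rw [hTξ, norm_smul]
    have h1 : ‖(a : ℂ)‖ = a := by
      rw [Complex.norm_real, Real.norm_of_nonneg ha_nonneg]
    rw [h1]
    apply mul_le_mul_of_nonneg_left _ ha_nonneg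
    rw [← Real.sqrt_sq (norm_nonneg _), ← Real.sqrt_sq (norm_nonneg ξ)]
    exact Real.sqrt_le_sqrt (by rw [hnorm]; exact hbessel)
  · intro ξ _ hξ hq
    set c : ℂ := (((1 + ε n ^ 2 : ℝ) ^ (-(1 / 2 : ℝ)) : ℝ) : ℂ) with hcdef
    have hc2 : c * c = (((1 + ε n ^ 2 : ℝ) : ℂ))⁻¹ := by
      rw [hcdef, rpow_half_sq hx, Complex.ofReal_inv]
    have hne : ((1 + ε n ^ 2 : ℝ) : ℂ) ≠ 0 := by
      exact_mod_cast ne_of_gt hx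
    have hqapp : ∀ (x : ℓ²) (j : ℕ), (q ε n x) j = ⟪f ε n, x⟫ * (f ε n) j := by
      intro x j
      simp [q, ContinuousLinearMap.smulRight_apply, lp.coeFn_smul]
    have hDq : ∀ j, (Dop d ⟨q ε n ξ, hq⟩ : ℓ²) j = (d j : ℂ) * (q ε n ξ) j := fun j => rfl
    have hDξ : ∀ j, (Dop d ⟨ξ, hξ⟩ : ℓ²) j = (d j : ℂ) * ξ j := fun j => rfl
    apply lp.ext
    funext k
    have hL : ((a : ℂ) • ((innerSL ℂ (e n)).smulRight (e (n + 1)) -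
        (innerSL ℂ (e (n + 1))).smulRight (e n))) ξ k
        = (a : ℂ) * (ξ n * (e (n + 1)) k - ξ (n + 1) * (e n) k) := by
      rw [ContinuousLinearMap.smul_apply, ContinuousLinearMap.sub_apply, lp.coeFn_smul, Pi.smul_apply]
      simp [ContinuousLinearMap.smul_apply, ContinuousLinearMap.sub_apply,
        ContinuousLinearMap.smulRight_apply, lp.coeFn_smul, lp.coeFn_sub, inner_e,
        mul_sub, Pi.sub_apply, Pi.smul_apply, smul_eq_mul]
      rw [← mul_sub]; rfl
    rw [hL, lp.coeFn_sub, Pi.sub_apply, hDq k, hqapp, hqapp, inner_f, inner_f,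
      hDξ n, hDξ (n + 1), f_apply, e_apply, e_apply]
    have hne' : (1 + (ε n : ℂ) ^ 2) ≠ 0 := by
      rw [show (1 + (ε n : ℂ) ^ 2) = ((1 + ε n ^ 2 : ℝ) : ℂ) by push_cast; ring]
      exact hne
    have hc2' : c * c = (1 + (ε n : ℂ) ^ 2)⁻¹ := by
      rw [hc2, show (1 + (ε n : ℂ) ^ 2) = ((1 + ε n ^ 2 : ℝ) : ℂ) by push_cast; ring]
    have key : (a : ℂ) = (ε n : ℂ) * (1 + (ε n : ℂ) ^ 2)⁻¹ * ((d (n + 1) : ℂ) - (d n : ℂ)) := by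
      rw [ha]
      push_cast
      field_simp
    rw [show (((1 + ε n ^ 2 : ℝ) ^ (-(1 / 2 : ℝ)) : ℝ) : ℂ) = c from rfl]
    rcases eq_or_ne n k with rfl | hkn
    · rw [if_pos rfl, if_neg (by omega : ¬ n = n + 1)]
      linear_combination (-(ξ (n + 1))) * key +
        (ε n : ℂ) * ξ (n + 1) * ((d (n + 1) : ℂ) - (d n : ℂ)) * hc2'
    · rcases eq_or_ne (n + 1) k with rfl | hkn1
      · rw [if_pos rfl, if_neg hkn.symm]
        linear_combination ξ n * key -
          (ε n : ℂ) * ξ n * ((d (n + 1) : ℂ) - (d n : ℂ)) * hc2'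
      · rw [if_neg hkn1.symm, if_neg hkn.symm]
        ring
end
end
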